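/- Let ū : ℝ^d → ℝ be twice continuously differentiable with partial derivatives ∂_i ū and ∂_i∂_j ū, let φ₁, …, φ_d : W → ℝ, and let x ∈ W be a point such that for each i = 1, …, d the corrector equation Σ_{y∈W, y~x} (x_i − y_i + φ_i(x) − φ_i(y)) = 0 holds. Define u : W → ℝ by u(z) := ū(z) + Σ_{i=1}^d ∂_i ū(z)·φ_i(z). Then Σ_{y∈W, y~x} (u(x) − u(y)) equals the sum of the following four terms: (I) Σ_{i,j} (1/2)·∂_i∂_j ū(x) · Σ_{y~x} (x_j − y_j)·(x_i − y_i + φ_i(x) − φ_i(y)); (II) Σ_{y~x} Σ_i (1/2)·(∂_i ū(x) − ∂_i ū(y))·(φ_i(x) + φ_i(y)); (III) Σ_{y~x} ( ū(x) − ū(y) − Σ_i ∂_i ū(x)·(x_i − y_i) − Σ_{i,j} (1/2)·∂_i∂_j ū(x)·(x_i − y_i)(x_j − y_j) ); (IV) Σ_{y~x} Σ_i (1/2)·( ∂_i ū(y) − ∂_i ū(x) − Σ_j ∂_i∂_j ū(x)·(x_j − y_j) )·(φ_i(x) − φ_i(y)). -/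

import Mathlib

attribute [local instance] Classical.propDecidable

noncomputable section

/-- The partial derivative `∂_i f` of a function on `ℝ^d`. -/
def pder (d : ℕ) (f : EuclideanSpace ℝ (Fin d) → ℝ) (i : Fin d)
    (z : EuclideanSpace ℝ (Fin d)) : ℝ :=
  fderiv ℝ f z (EuclideanSpace.single i 1)

/-- The neighbors of `x` in `W`: points `y ∈ W`, `y ≠ x`, within Euclidean distance 1. -/
def nbrs (d : ℕ) (W : Finset (EuclideanSpace ℝ (Fin d))) (x : EuclideanSpace ℝ (Fin d)) :
    Finset (EuclideanSpace ℝ (Fin d)) :=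
  W.filter (fun y => y ≠ x ∧ dist x y ≤ 1)

/-- The two-scale expansion `u := ū + Σ_i ∂_i ū · φ_i`. -/
def twoScale (d : ℕ) (ubar : EuclideanSpace ℝ (Fin d) → ℝ)
    (φ : Fin d → EuclideanSpace ℝ (Fin d) → ℝ) (z : EuclideanSpace ℝ (Fin d)) : ℝ :=
  ubar z + ∑ i, pder d ubar i z * φ i z

/-- The purely algebraic form of the two-scale expansion identity. -/
theorem two_scale_alg {ι α : Type*} [Fintype ι] (N : Finset α) (x : α)
    (f : α → ℝ) (g : ι → α → ℝ) (D : ι → ι → ℝ) (c φ : ι → α → ℝ)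
    (hcorr : ∀ i, ∑ y ∈ N, (c i y + φ i x - φ i y) = 0) :
    ∑ y ∈ N, ((f x + ∑ i, g i x * φ i x) - (f y + ∑ i, g i y * φ i y))
      = (∑ i, ∑ j, (1/2) * D i j * ∑ y ∈ N, c j y * (c i y + φ i x - φ i y))
        + (∑ y ∈ N, ∑ i, (1/2) * (g i x - g i y) * (φ i x + φ i y))
        + (∑ y ∈ N, (f x - f y - (∑ i, g i x * c i y)
              - ∑ i, ∑ j, (1/2) * D i j * c i y * c j y))
        + (∑ y ∈ N, ∑ i, (1/2) * (g i y - g i x - ∑ j, D i j * c j y) * (φ i x - φ i y)) := by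
  have h1 : (∑ i, ∑ j, (1/2) * D i j * ∑ y ∈ N, c j y * (c i y + φ i x - φ i y))
      = ∑ y ∈ N, ∑ i, ∑ j, (1/2) * D i j * (c j y * (c i y + φ i x - φ i y)) := by
    simp_rw [Finset.mul_sum]
    rw [show (∑ i, ∑ j, ∑ y ∈ N, (1/2) * D i j * (c j y * (c i y + φ i x - φ i y)))
        = ∑ i, ∑ y ∈ N, ∑ j, (1/2) * D i j * (c j y * (c i y + φ i x - φ i y)) from
      Finset.sum_congr rfl fun i _ => Finset.sum_comm]
    exact Finset.sum_comm
  rw [h1, ← Finset.sum_add_distrib, ← Finset.sum_add_distrib, ← Finset.sum_add_distrib]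
  rw [← sub_eq_zero, ← Finset.sum_sub_distrib]
  have key : ∀ y ∈ N,
      ((f x + ∑ i, g i x * φ i x) - (f y + ∑ i, g i y * φ i y))
      - ((∑ i, ∑ j, (1/2) * D i j * (c j y * (c i y + φ i x - φ i y)))
        + (∑ i, (1/2) * (g i x - g i y) * (φ i x + φ i y))
        + (f x - f y - (∑ i, g i x * c i y) - ∑ i, ∑ j, (1/2) * D i j * c i y * c j y)
        + (∑ i, (1/2) * (g i y - g i x - ∑ j, D i j * c j y) * (φ i x - φ i y)))
      = ∑ i, g i x * (c i y + φ i x - φ i y) := by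
    intro y _
    have h2 : ∀ i : ι, ∑ j, (1/2) * D i j * (c j y * (c i y + φ i x - φ i y))
        = (∑ j, D i j * c j y) * ((1/2) * (c i y + φ i x - φ i y)) := fun i => by
      rw [Finset.sum_mul]; exact Finset.sum_congr rfl fun j _ => by ring
    have h3 : ∀ i : ι, ∑ j, (1/2) * D i j * c i y * c j y
        = (∑ j, D i j * c j y) * ((1/2) * c i y) := fun i => by
      rw [Finset.sum_mul]; exact Finset.sum_congr rfl fun j _ => by ring
    simp_rw [h2, h3]
    rw [show ∀ (A B T1 T2 T3 T4 T5 fx fy : ℝ),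
        (fx + A) - (fy + B) - (T1 + T2 + (fx - fy - T3 - T4) + T5)
        = (((((A - B) - T1) - T2) + T3) + T4) - T5 from fun _ _ _ _ _ _ _ _ _ => by ring]
    simp only [← Finset.sum_sub_distrib, ← Finset.sum_add_distrib]
    exact Finset.sum_congr rfl fun i _ => by ring
  rw [Finset.sum_congr rfl key]
  rw [Finset.sum_comm]
  simp_rw [← Finset.mul_sum, hcorr, mul_zero, Finset.sum_const_zero]

/-- The exact two-scale expansion identity (displays (5.3)–(5.5) in Lemma 5.2):
inserting the two-scale ansatz into the graph Laplacian at a point where the corrector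
equation holds yields the homogenized-flux main term plus three explicit remainders. -/
theorem two_scale_expansion_identity (d : ℕ) (hd : 2 ≤ d)
    (W : Finset (EuclideanSpace ℝ (Fin d)))
    (ubar : EuclideanSpace ℝ (Fin d) → ℝ) (hubar : ContDiff ℝ 2 ubar)
    (φ : Fin d → EuclideanSpace ℝ (Fin d) → ℝ)
    (x : EuclideanSpace ℝ (Fin d)) (hx : x ∈ W)
    (hcorr : ∀ i : Fin d, ∑ y ∈ nbrs d W x, (x i - y i + φ i x - φ i y) = 0) :
    ∑ y ∈ nbrs d W x, (twoScale d ubar φ x - twoScale d ubar φ y)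
      = (∑ i, ∑ j, (1/2) * pder d (pder d ubar i) j x *
            ∑ y ∈ nbrs d W x, (x j - y j) * (x i - y i + φ i x - φ i y))
        + (∑ y ∈ nbrs d W x, ∑ i,
            (1/2) * (pder d ubar i x - pder d ubar i y) * (φ i x + φ i y))
        + (∑ y ∈ nbrs d W x,
            (ubar x - ubar y - (∑ i, pder d ubar i x * (x i - y i))
              - ∑ i, ∑ j, (1/2) * pder d (pder d ubar i) j x * (x i - y i) * (x j - y j)))
        + (∑ y ∈ nbrs d W x, ∑ i,
            (1/2) * (pder d ubar i y - pder d ubar i x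
                - ∑ j, pder d (pder d ubar i) j x * (x j - y j)) * (φ i x - φ i y)) := by
  simpa only [twoScale] using
    two_scale_alg (ι := Fin d) (nbrs d W x) x ubar (fun i z => pder d ubar i z)
      (fun i j => pder d (pder d ubar i) j x) (fun i y => x i - y i) φ hcorr
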